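/- Define Φ(n,k) = E[min(X_{n,k}, k)] where X_{n,k} ~ Binomial(n, k/n). Then Φ(n,k) is monotonically non-decreasing in k: for all integers 1 ≤ k < n, Φ(n, k+1) ≥ Φ(n, k). -/

import Mathlib

open Finset

/-- `Phi n k` is the expectation of `min(X, k)` for `X ~ Binomial(n, k/n)`. -/
noncomputable def Phi (n k : ℕ) : ℝ :=
  ∑ t ∈ Finset.range (n + 1),
    (n.choose t : ℝ) * ((k : ℝ) / n) ^ t * (1 - (k : ℝ) / n) ^ (n - t) * (min t k : ℕ)

/-- Tail probability `P(X > j)` for `X ~ Binomial(n, p)`. -/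
noncomputable def Ttail (n j : ℕ) (p : ℝ) : ℝ :=
  ∑ t ∈ Finset.Ioc j n, (n.choose t : ℝ) * p ^ t * (1 - p) ^ (n - t)

lemma min_cast_eq (t k : ℕ) :
    ((min t k : ℕ) : ℝ) = ∑ j ∈ Finset.range k, (if j < t then (1:ℝ) else 0) := by
  rw [Finset.sum_boole]
  congr 1
  have h : (Finset.range k).filter (fun j => j < t) = Finset.range (min k t) := by
    ext j; simp [Nat.lt_min]
  rw [h, Finset.card_range, min_comm]

lemma phi_eq (n k : ℕ) :
    Phi n k = ∑ j ∈ Finset.range k, Ttail n j ((k : ℝ) / n) := by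
  unfold Phi Ttail
  have step1 : ∀ t ∈ Finset.range (n+1),
      (n.choose t : ℝ) * ((k:ℝ)/n)^t * (1 - (k:ℝ)/n)^(n-t) * ((min t k : ℕ) : ℝ)
      = ∑ j ∈ Finset.range k,
          (if j < t then (n.choose t : ℝ) * ((k:ℝ)/n)^t * (1 - (k:ℝ)/n)^(n-t) else 0) := by
    intro t _
    rw [min_cast_eq, Finset.mul_sum]
    apply Finset.sum_congr rfl
    intro j _
    split <;> simp
  rw [Finset.sum_congr rfl step1, Finset.sum_comm]
  apply Finset.sum_congr rfl
  intro j _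
  rw [← Finset.sum_filter]
  apply Finset.sum_congr _ (fun _ _ => rfl)
  ext t
  simp only [Finset.mem_filter, Finset.mem_range, Finset.mem_Ioc, Nat.lt_succ_iff]
  tauto

lemma hasDerivAt_term (n t : ℕ) (c : ℝ) (p : ℝ) :
    HasDerivAt (fun x : ℝ => c * x ^ t * (1 - x) ^ (n - t))
      (c * ((t : ℝ) * p ^ (t-1) * (1-p)^(n-t) - ((n-t : ℕ) : ℝ) * p^t * (1-p)^(n-t-1))) p := by
  have h1 : HasDerivAt (fun x : ℝ => x ^ t) ((t:ℝ) * p ^ (t-1)) p := hasDerivAt_pow t p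
  have hg : HasDerivAt (fun x : ℝ => 1 - x) (-1) p := (hasDerivAt_id p).const_sub 1
  have h2 : HasDerivAt (fun x : ℝ => (1 - x) ^ (n - t))
      (((n-t : ℕ):ℝ) * (1-p)^(n-t-1) * (-1)) p :=
    (hasDerivAt_pow (n-t) (1-p)).comp p hg
  have h3 : HasDerivAt (fun x : ℝ => c * (x ^ t * (1 - x) ^ (n - t))) _ p := (h1.mul h2).const_mul c
  simp only [mul_assoc]
  convert h3 using 1
  ring

lemma hasDerivAt_Ttail (n j : ℕ) (p : ℝ) :
    HasDerivAt (Ttail n j)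
      (∑ t ∈ Finset.Ioc j n,
        ((n.choose t : ℝ) * ((t : ℝ) * p ^ (t-1) * (1-p)^(n-t)
          - ((n-t : ℕ) : ℝ) * p^t * (1-p)^(n-t-1)))) p := by
  apply HasDerivAt.fun_sum
  intro t _
  exact hasDerivAt_term n t _ p

lemma deriv_sum_nonneg (n j : ℕ) (hn : 1 ≤ n) (hjn : j ≤ n) {p : ℝ} (hp0 : 0 ≤ p) (hp1 : p ≤ 1) :
    0 ≤ ∑ t ∈ Finset.Ioc j n,
      ((n.choose t : ℝ) * ((t : ℝ) * p ^ (t-1) * (1-p)^(n-t)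
        - ((n-t : ℕ) : ℝ) * p^t * (1-p)^(n-t-1))) := by
  set a : ℕ → ℝ := fun t => (n : ℝ) * ((n-1).choose (t-1) : ℝ) * p^(t-1) * (1-p)^(n-t) with ha
  have key : ∀ t ∈ Finset.Ioc j n,
      (n.choose t : ℝ) * ((t : ℝ) * p ^ (t-1) * (1-p)^(n-t)
        - ((n-t : ℕ) : ℝ) * p^t * (1-p)^(n-t-1)) = a t - a (t+1) := by
    intro t ht
    obtain ⟨ht1, ht2⟩ := Finset.mem_Ioc.mp ht
    have ht1' : 1 ≤ t := by omega
    have hn' : (n-1) + 1 = n := by omega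
    have ht' : (t-1) + 1 = t := by omega
    have id1 : n * (n-1).choose (t-1) = n.choose t * t := by
      have h := Nat.add_one_mul_choose_eq (n-1) (t-1)
      simp only [Nat.succ_eq_add_one, hn', ht'] at h
      exact h
    have id2 : (n - t) * n.choose t = n * (n-1).choose t := by
      have h1 := Nat.choose_succ_right_eq n t
      have h2 := Nat.add_one_mul_choose_eq (n-1) t
      simp only [Nat.succ_eq_add_one, hn'] at h2
      rw [mul_comm, ← h1]
      exact h2.symm
    have id1' : (n : ℝ) * ((n-1).choose (t-1) : ℝ) = (n.choose t : ℝ) * t := by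
      exact_mod_cast congrArg (Nat.cast : ℕ → ℝ) id1
    have id2' : ((n - t : ℕ) : ℝ) * (n.choose t : ℝ) = (n : ℝ) * ((n-1).choose t : ℝ) := by
      exact_mod_cast congrArg (Nat.cast : ℕ → ℝ) id2
    have e1 : t + 1 - 1 = t := rfl
    have e2 : n - (t+1) = n - t - 1 := by omega
    simp only [ha, e1, e2]
    rw [show (n:ℝ) * ((n-1).choose (t-1) : ℝ) * p^(t-1) * (1-p)^(n-t)
        = ((n:ℝ) * ((n-1).choose (t-1) : ℝ)) * (p^(t-1) * (1-p)^(n-t)) by ring,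
      id1']
    rw [show (n:ℝ) * ((n-1).choose t : ℝ) * p^t * (1-p)^(n-t-1)
        = ((n:ℝ) * ((n-1).choose t : ℝ)) * (p^t * (1-p)^(n-t-1)) by ring,
      ← id2']
    ring
  rw [Finset.sum_congr rfl key]
  have hset : Finset.Ioc j n = Finset.Ico (j+1) (n+1) := by
    ext x; simp [Finset.mem_Ioc, Finset.mem_Ico, Nat.lt_succ_iff, Nat.succ_le_iff]
  rw [hset, Finset.sum_Ico_eq_sum_range]
  have tel : ∑ i ∈ Finset.range (n+1-(j+1)), (a (j+1+i) - a (j+1+i+1))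
      = a (j+1+0) - a (j+1+(n+1-(j+1))) := by
    rw [← Finset.sum_range_sub' (fun i => a (j+1+i)) (n+1-(j+1))]
    apply Finset.sum_congr rfl
    intro i _
    exact congrArg (fun x => a (j+1+i) - a x) (by omega)
  rw [tel]
  have hend : j + 1 + (n + 1 - (j + 1)) = n + 1 := by omega
  rw [show j + 1 + 0 = j + 1 from rfl, hend]
  have hzero : a (n+1) = 0 := by
    have h0 : (n-1).choose (n+1-1) = 0 := Nat.choose_eq_zero_of_lt (by omega)
    simp only [ha, h0, Nat.cast_zero, mul_zero, zero_mul]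
  rw [hzero, sub_zero, ha]
  have h1p : (0:ℝ) ≤ 1 - p := by linarith
  exact mul_nonneg (mul_nonneg (mul_nonneg (by positivity) (by positivity))
    (pow_nonneg hp0 _)) (pow_nonneg h1p _)

lemma Ttail_mono (n j : ℕ) (hn : 1 ≤ n) (hjn : j ≤ n) {p q : ℝ}
    (hp : 0 ≤ p) (hq : q ≤ 1) (hpq : p ≤ q) : Ttail n j p ≤ Ttail n j q := by
  have hmono : MonotoneOn (Ttail n j) (Set.Icc 0 1) := by
    apply monotoneOn_of_deriv_nonneg (convex_Icc 0 1)
    · exact fun x _ => (hasDerivAt_Ttail n j x).continuousAt.continuousWithinAt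
    · intro x hx
      exact (hasDerivAt_Ttail n j x).differentiableAt.differentiableWithinAt
    · intro x hx
      rw [interior_Icc] at hx
      rw [(hasDerivAt_Ttail n j x).deriv]
      exact deriv_sum_nonneg n j hn hjn (le_of_lt hx.1) (le_of_lt hx.2)
  exact hmono ⟨hp, le_trans hpq hq⟩ ⟨le_trans hp hpq, hq⟩ hpq

lemma Ttail_nonneg (n j : ℕ) {p : ℝ} (hp0 : 0 ≤ p) (hp1 : p ≤ 1) : 0 ≤ Ttail n j p := by
  apply Finset.sum_nonneg
  intro t _
  have h1p : (0:ℝ) ≤ 1 - p := by linarith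
  exact mul_nonneg (mul_nonneg (by positivity) (pow_nonneg hp0 _)) (pow_nonneg h1p _)

/-- `Phi` is monotonically non-decreasing in `k`. -/
theorem phi_monotone_in_k (n k : ℕ) (hk : 1 ≤ k) (hkn : k < n) :
    Phi n k ≤ Phi n (k + 1) := by
  have hn : 1 ≤ n := le_of_lt (lt_of_le_of_lt hk hkn)
  have hnpos : (0:ℝ) < n := by exact_mod_cast lt_of_le_of_lt (Nat.zero_le k) hkn
  have hp0 : (0:ℝ) ≤ (k:ℝ)/n := by positivity
  have hq1 : ((k+1:ℕ):ℝ)/n ≤ 1 := by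
    rw [div_le_one hnpos]
    exact_mod_cast hkn
  have hpq : (k:ℝ)/n ≤ ((k+1:ℕ):ℝ)/n := by
    push_cast
    gcongr
    linarith
  rw [phi_eq, phi_eq]
  calc ∑ j ∈ Finset.range k, Ttail n j ((k:ℝ)/n)
      ≤ ∑ j ∈ Finset.range k, Ttail n j (((k+1:ℕ):ℝ)/n) := by
        apply Finset.sum_le_sum
        intro j hj
        exact Ttail_mono n j hn (le_of_lt (lt_of_lt_of_le (Finset.mem_range.mp hj)
          (le_of_lt hkn))) hp0 hq1 hpq
    _ ≤ ∑ j ∈ Finset.range (k+1), Ttail n j (((k+1:ℕ):ℝ)/n) := by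
        apply Finset.sum_le_sum_of_subset_of_nonneg
          (Finset.range_subset_range.mpr (Nat.le_succ k))
        intro j _ _
        exact Ttail_nonneg n j (le_trans hp0 hpq) hq1
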